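/- Let f₀, b₁, …, b_n, λ_1, …, λ_n, λ_0, α(1), …, α(n), β and Θ be as in the sufficiency statement for exponential-sum circuit polynomials, and assume the vectors α(1), …, α(n) are linearly independent. If c < −Θ, then there exists w ∈ ℝⁿ with f₀ + ∑_{j=1}^n b_j · exp(⟨w, α(j)⟩) + c · exp(⟨w, β⟩) < 0. -/

import Mathlib

open Real Finset

theorem stmt_7 (n : ℕ) (f0 : ℝ) (b lam : Fin n → ℝ) (α : Fin n → Fin n → ℝ) (c : ℝ)
    (hf0 : 0 < f0) (hb : ∀ j, 0 < b j) (hlam : ∀ j, 0 < lam j)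
    (hsum : ∑ j, lam j < 1)
    (hind : LinearIndependent ℝ α)
    (hc : c < -((f0 / (1 - ∑ j, lam j)) ^ (1 - ∑ j, lam j) *
        ∏ j, (b j / lam j) ^ lam j)) :
    ∃ w : Fin n → ℝ,
      f0 + ∑ j, b j * Real.exp (∑ i, w i * α j i)
          + c * Real.exp (∑ i, w i * (∑ j, lam j * α j i)) < 0 := by
  set L0 : ℝ := 1 - ∑ j, lam j with hL0
  have hL0pos : 0 < L0 := by rw [hL0]; linarith
  set x : Fin n → ℝ := fun j => lam j * f0 / (L0 * b j) with hx
  have hxpos : ∀ j, 0 < x j := fun j =>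
    div_pos (mul_pos (hlam j) hf0) (mul_pos hL0pos (hb j))
  set t : Fin n → ℝ := fun j => Real.log (x j) with ht
  clear_value L0 x t
  -- find w with ⟨w, α j⟩ = t j for all j
  set M : Matrix (Fin n) (Fin n) ℝ := Matrix.of α with hM
  have hUnit : IsUnit M := Matrix.linearIndependent_rows_iff_isUnit.1 hind
  obtain ⟨w, hw⟩ := Matrix.mulVec_surjective_iff_isUnit.2 hUnit t
  have hwj : ∀ j, ∑ i, w i * α j i = t j := by
    intro j
    have := congrFun hw j
    simpa [Matrix.mulVec, dotProduct, hM, mul_comm] using this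
  refine ⟨w, ?_⟩
  have hexp1 : ∀ j, Real.exp (∑ i, w i * α j i) = x j := by
    intro j; rw [hwj j, ht, Real.exp_log (hxpos j)]
  have hβ : ∑ i, w i * (∑ j, lam j * α j i) = ∑ j, lam j * t j := by
    simp_rw [Finset.mul_sum]
    rw [Finset.sum_comm]
    refine Finset.sum_congr rfl fun j _ => ?_
    rw [← hwj j, Finset.mul_sum]
    exact Finset.sum_congr rfl fun i _ => by ring
  rw [hβ]
  simp_rw [hexp1]
  have hE : Real.exp (∑ j, lam j * t j) = ∏ j, x j ^ lam j := by
    rw [Real.exp_sum]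
    refine Finset.prod_congr rfl fun j _ => ?_
    rw [ht, Real.rpow_def_of_pos (hxpos j), mul_comm]
  rw [hE]
  have hsum2 : ∑ j, b j * x j = (∑ j, lam j) * (f0 / L0) := by
    rw [Finset.sum_mul]
    refine Finset.sum_congr rfl fun j _ => ?_
    rw [hx]
    field_simp [hL0pos.ne', (hb j).ne']
  have hEpos : 0 < ∏ j, x j ^ lam j :=
    Finset.prod_pos fun j _ => Real.rpow_pos_of_pos (hxpos j) _
  have hf0L0 : (0:ℝ) < f0 / L0 := div_pos hf0 hL0pos
  have hTheta : ((f0 / L0) ^ L0 * ∏ j, (b j / lam j) ^ lam j) * ∏ j, x j ^ lam j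
      = f0 / L0 := by
    rw [mul_assoc, ← Finset.prod_mul_distrib]
    have hjj : ∀ j ∈ Finset.univ, (b j / lam j) ^ lam j * x j ^ lam j
        = (f0 / L0) ^ lam j := by
      intro j _
      rw [← Real.mul_rpow (div_pos (hb j) (hlam j)).le (le_of_lt (hxpos j))]
      congr 1
      rw [hx]
      field_simp [hL0pos.ne', (hb j).ne', (hlam j).ne']
    rw [Finset.prod_congr rfl hjj, ← Real.rpow_sum_of_pos hf0L0,
        ← Real.rpow_add hf0L0]
    have : L0 + ∑ j, lam j = 1 := by rw [hL0]; ring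
    rw [this, Real.rpow_one]
  have h1 : f0 + (∑ j, lam j) * (f0 / L0) = f0 / L0 := by
    field_simp
    linear_combination hL0
  have h2 := mul_lt_mul_of_pos_right hc hEpos
  rw [neg_mul, hTheta] at h2
  rw [hsum2]
  linarith
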